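/- Let V be a finite set of N nodes partitioned into two sensitive groups S₀ and S₁ of sizes N₀ ≥ 1 and N₁ ≥ 1, with features X : V → ℝ^d and the fairness-aware message passing F⁽⁰⁾ = X, F⁽¹⁾, F⁽²⁾. Suppose g : ℝ² → ℝ² is the softmax map and L > 0 satisfies 2·|g(x)₁ − g(y)₁| ≤ L·‖x − y‖ for all x, y ∈ ℝ². For any matrix W ∈ ℝ^{d×2}, define Δ_DP = |(1/N₀)·Σ_{i∈S₀} g(Wᵀ F⁽²⁾_i)₁ − (1/N₁)·Σ_{j∈S₁} g(Wᵀ F⁽²⁾_j)₁| and Δ_DP^Rep = ‖(1/N₀)·Σ_{i∈S₀} F⁽²⁾_i − (1/N₁)·Σ_{j∈S₁} F⁽²⁾_j‖. Then Δ_DP ≤ (L/2)·‖W‖_op·(Δ_DP^Rep + C₁·‖Δ‖), where C₁ = (2 + 4/N₀ + 4/N₁)² + 6 + 8/N₀ + 8/N₁ and Δ ∈ ℝ^d is the componentwise maximal deviation of X from its overall mean, Δ_m = max_{i∈V} |(1/N)·Σ_{j∈V} X_{j,m} − X_{i,m}|. -/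

import Mathlib

open Matrix Finset

/-- RBF kernel `k(x,y) = exp(-α‖x-y‖²)`. -/
noncomputable def ker {d : ℕ} (α : ℝ) (x y : EuclideanSpace ℝ (Fin d)) : ℝ :=
  Real.exp (-α * ‖x - y‖ ^ 2)

/-- The sensitive group `S_b`, where group membership is given by `grp`
(`false` encodes `S₀` and `true` encodes `S₁`). -/
def sgrp {V : Type*} [Fintype V] (grp : V → Bool) (b : Bool) : Finset V :=
  Finset.univ.filter (fun i => grp i = b)

/-- Fairness-aware message passing: `F 0 = X`, and each layer `k ≥ 1` updates node `i`
(lying in group `grp i`, with opposite group `!grp i`) by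
`F⁽ᵏ⁾_i = X_i + (1/|N(i)|)·Σ_{u∈N(i)} F⁽ᵏ⁻¹⁾_u
       − (1/N_t²)·Σ_{u∈S_t} k(F⁽ᵏ⁻¹⁾_u,F⁽ᵏ⁻¹⁾_i)·F⁽ᵏ⁻¹⁾_u
       + (1/(N₀N₁))·Σ_{u∈S_{1−t}} k(F⁽ᵏ⁻¹⁾_u,F⁽ᵏ⁻¹⁾_i)·F⁽ᵏ⁻¹⁾_u
       + ((1/N_t²)·Σ_{u∈S_t} k(...) − (1/(N₀N₁))·Σ_{u∈S_{1−t}} k(...))·F⁽ᵏ⁻¹⁾_i`. -/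
def FairMP {V : Type*} [Fintype V] {d : ℕ} (α : ℝ) (grp : V → Bool)
    (Nb : V → Finset V) (X : V → EuclideanSpace ℝ (Fin d))
    (F : ℕ → V → EuclideanSpace ℝ (Fin d)) : Prop :=
  F 0 = X ∧
  ∀ k : ℕ, 1 ≤ k → ∀ i : V,
    F k i = X i + (((Nb i).card : ℝ)⁻¹) • ∑ u ∈ Nb i, F (k-1) u
      - (1 / ((sgrp grp (grp i)).card : ℝ) ^ 2) •
          ∑ u ∈ sgrp grp (grp i), ker α (F (k-1) u) (F (k-1) i) • F (k-1) u
      + (1 / (((sgrp grp false).card : ℝ) * ((sgrp grp true).card : ℝ))) •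
          ∑ u ∈ sgrp grp (!grp i), ker α (F (k-1) u) (F (k-1) i) • F (k-1) u
      + ((1 / ((sgrp grp (grp i)).card : ℝ) ^ 2) *
            ∑ u ∈ sgrp grp (grp i), ker α (F (k-1) u) (F (k-1) i)
         - (1 / (((sgrp grp false).card : ℝ) * ((sgrp grp true).card : ℝ))) *
            ∑ u ∈ sgrp grp (!grp i), ker α (F (k-1) u) (F (k-1) i)) • F (k-1) i

/-- Componentwise maximal deviation of the rows of `F` from the overall mean row:
`(dev F)_m = max_{i∈V} |F_{i,m} − (1/N)·Σ_{j∈V} F_{j,m}|`. -/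
noncomputable def dev {V : Type*} [Fintype V] {d : ℕ}
    (F : V → EuclideanSpace ℝ (Fin d)) : EuclideanSpace ℝ (Fin d) :=
  WithLp.toLp 2 fun m => ⨆ i : V, |F i m - (1 / (Fintype.card V : ℝ)) * ∑ j : V, F j m|

/-- The softmax map `g : ℝ² → ℝ²`, `g(x)_j = exp(x_j)/(exp(x₀) + exp(x₁))`. -/
noncomputable def softmax (x : EuclideanSpace ℝ (Fin 2)) : EuclideanSpace ℝ (Fin 2) :=
  WithLp.toLp 2 fun j => Real.exp (x j) / (Real.exp (x 0) + Real.exp (x 1))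

/-- `A` acting on a Euclidean vector `v`, i.e. the matrix-vector product `A v`. -/
noncomputable def mulVecE {m n : ℕ} (A : Matrix (Fin m) (Fin n) ℝ)
    (v : EuclideanSpace ℝ (Fin n)) : EuclideanSpace ℝ (Fin m) :=
  WithLp.toLp 2 fun i => ∑ j, A i j * v j

/-- The operator norm of `W ∈ ℝ^{d×2}`, viewed (via `v ↦ Wᵀ v`) as a linear map
`ℝ^d → ℝ²` between Euclidean spaces. -/
noncomputable def opNorm {d : ℕ} (W : Matrix (Fin d) (Fin 2) ℝ) : ℝ :=
  ‖LinearMap.toContinuousLinearMap (Matrix.toEuclideanLin Wᵀ)‖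

/-! ### Auxiliary lemmas -/

lemma ker_nonneg' {d : ℕ} (α : ℝ) (x y : EuclideanSpace ℝ (Fin d)) : 0 ≤ ker α x y :=
  (Real.exp_pos _).le

lemma ker_le_one' {d : ℕ} {α : ℝ} (hα : 0 < α) (x y : EuclideanSpace ℝ (Fin d)) :
    ker α x y ≤ 1 := by
  rw [ker, ← Real.exp_zero]
  apply Real.exp_le_exp.2
  have : 0 ≤ α * ‖x - y‖ ^ 2 := by positivity
  linarith

lemma enorm_le_of_abs_le' {d : ℕ} {v w : EuclideanSpace ℝ (Fin d)}
    (h : ∀ m, |v m| ≤ w m) : ‖v‖ ≤ ‖w‖ := by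
  rw [EuclideanSpace.norm_eq, EuclideanSpace.norm_eq]
  apply Real.sqrt_le_sqrt
  apply Finset.sum_le_sum
  intro m _
  rw [Real.norm_eq_abs, Real.norm_eq_abs]
  exact pow_le_pow_left₀ (abs_nonneg _) ((h m).trans (le_abs_self _)) 2

lemma sub_mean_le_dev' {V : Type*} [Fintype V] [Nonempty V] {d : ℕ}
    (X : V → EuclideanSpace ℝ (Fin d)) (i : V) :
    ‖X i - (1 / (Fintype.card V : ℝ)) • ∑ j, X j‖ ≤ ‖dev X‖ := by
  apply enorm_le_of_abs_le'
  intro m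
  have key : (X i - (1 / (Fintype.card V : ℝ)) • ∑ j, X j) m
      = X i m - (1 / (Fintype.card V : ℝ)) * ∑ j, X j m := by
    have : (∑ j, X j) m = ∑ j, X j m := by rw [WithLp.ofLp_sum, Finset.sum_apply]
    simp [PiLp.sub_apply, PiLp.smul_apply, this, smul_eq_mul]
  rw [key]
  exact le_ciSup (f := fun i : V => |X i m - (1 / (Fintype.card V : ℝ)) * ∑ j : V, X j m|)
    (Set.Finite.bddAbove (Set.finite_range _)) i

lemma avg_dist_le' {V : Type*} {E : Type*} [NormedAddCommGroup E] [NormedSpace ℝ E]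
    (s : Finset V) (hs : s.Nonempty) (f : V → E) (c : E) (r : ℝ)
    (h : ∀ u ∈ s, ‖f u - c‖ ≤ r) :
    ‖(s.card : ℝ)⁻¹ • ∑ u ∈ s, f u - c‖ ≤ r := by
  have hc : (s.card : ℝ) ≠ 0 := Nat.cast_ne_zero.2 (Finset.card_pos.2 hs).ne'
  have hrw : (s.card : ℝ)⁻¹ • ∑ u ∈ s, f u - c = (s.card : ℝ)⁻¹ • ∑ u ∈ s, (f u - c) := by
    rw [Finset.sum_sub_distrib, smul_sub, Finset.sum_const,
      (Nat.cast_smul_eq_nsmul ℝ _ _).symm, smul_smul, inv_mul_cancel₀ hc, one_smul]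
  rw [hrw, norm_smul]
  have h1 : ‖∑ u ∈ s, (f u - c)‖ ≤ (s.card : ℝ) * r := by
    calc ‖∑ u ∈ s, (f u - c)‖ ≤ ∑ u ∈ s, ‖f u - c‖ := norm_sum_le _ _
      _ ≤ ∑ _u ∈ s, r := Finset.sum_le_sum h
      _ = (s.card : ℝ) * r := by rw [Finset.sum_const, nsmul_eq_mul]
  rw [Real.norm_eq_abs, abs_inv, Nat.abs_cast]
  calc (s.card : ℝ)⁻¹ * ‖∑ u ∈ s, (f u - c)‖ ≤ (s.card : ℝ)⁻¹ * ((s.card : ℝ) * r) := by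
        apply mul_le_mul_of_nonneg_left h1 (by positivity)
    _ = r := by field_simp

lemma Edecomp' {E : Type*} [AddCommGroup E] [Module ℝ E] {V : Type*}
    (s s' : Finset V) (G : V → E) (i : V) (p q : ℝ) (k : V → ℝ) (Xm M : E) :
    Xm + M - p • ∑ u ∈ s, k u • G u + q • ∑ u ∈ s', k u • G u
      + (p * ∑ u ∈ s, k u - q * ∑ u ∈ s', k u) • G i - Xm - M
    = ∑ u ∈ s, (p * k u) • (G i - G u) - ∑ u ∈ s', (q * k u) • (G i - G u) := by
  simp only [smul_sub, sub_smul, Finset.sum_sub_distrib, Finset.smul_sum, smul_smul,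
    Finset.mul_sum, Finset.sum_smul]
  abel

lemma norm_kersum_le' {E : Type*} [NormedAddCommGroup E] [NormedSpace ℝ E] {V : Type*}
    (s : Finset V) (p : ℝ) (hp : 0 ≤ p) (k : V → ℝ) (hk : ∀ u ∈ s, 0 ≤ k u ∧ k u ≤ 1)
    (f : V → E) (R : ℝ) (hR : 0 ≤ R) (hf : ∀ u ∈ s, ‖f u‖ ≤ R) :
    ‖∑ u ∈ s, (p * k u) • f u‖ ≤ p * s.card * R := by
  calc ‖∑ u ∈ s, (p * k u) • f u‖ ≤ ∑ u ∈ s, ‖(p * k u) • f u‖ := norm_sum_le _ _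
    _ ≤ ∑ _u ∈ s, p * R := by
        apply Finset.sum_le_sum
        intro u hu
        rw [norm_smul, Real.norm_eq_abs, abs_of_nonneg (mul_nonneg hp (hk u hu).1)]
        calc p * k u * ‖f u‖ ≤ p * 1 * R := by
              apply mul_le_mul (by nlinarith [(hk u hu).2]) (hf u hu) (norm_nonneg _)
                (by nlinarith)
          _ = p * R := by ring
    _ = p * s.card * R := by rw [Finset.sum_const, nsmul_eq_mul]; ring

lemma scal_aux' (n n' r : ℝ) (hn : n ≠ 0) (hn' : n' ≠ 0) :
    1 / n ^ 2 * n * (2 * r) + 1 / (n * n') * n' * (2 * r) = 4 * r / n := by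
  field_simp; ring

lemma step_bound' {V : Type*} [Fintype V] {d : ℕ} {α : ℝ} (hα : 0 < α)
    (grp : V → Bool)
    (hc0 : 1 ≤ (sgrp grp false).card) (hc1 : 1 ≤ (sgrp grp true).card)
    (Nb : V → Finset V) (hNb : ∀ i, (Nb i).Nonempty)
    (X G Fk : V → EuclideanSpace ℝ (Fin d))
    (c : EuclideanSpace ℝ (Fin d)) (r : ℝ)
    (hG : ∀ u, ‖G u - c‖ ≤ r) (i : V)
    (heq : Fk i = X i + (((Nb i).card : ℝ)⁻¹) • ∑ u ∈ Nb i, G u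
      - (1 / ((sgrp grp (grp i)).card : ℝ) ^ 2) •
          ∑ u ∈ sgrp grp (grp i), ker α (G u) (G i) • G u
      + (1 / (((sgrp grp false).card : ℝ) * ((sgrp grp true).card : ℝ))) •
          ∑ u ∈ sgrp grp (!grp i), ker α (G u) (G i) • G u
      + ((1 / ((sgrp grp (grp i)).card : ℝ) ^ 2) *
            ∑ u ∈ sgrp grp (grp i), ker α (G u) (G i)
         - (1 / (((sgrp grp false).card : ℝ) * ((sgrp grp true).card : ℝ))) *
            ∑ u ∈ sgrp grp (!grp i), ker α (G u) (G i)) • G i) :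
    ‖Fk i - X i - c‖ ≤ r + 4 * r / ((sgrp grp (grp i)).card : ℝ) := by
  have hr : 0 ≤ r := le_trans (norm_nonneg _) (hG i)
  set s : Finset V := sgrp grp (grp i) with hs
  set s' : Finset V := sgrp grp (!grp i) with hs'
  set p : ℝ := 1 / ((s.card : ℝ)) ^ 2 with hp
  set q : ℝ := 1 / (((sgrp grp false).card : ℝ) * ((sgrp grp true).card : ℝ)) with hq
  set k : V → ℝ := fun u => ker α (G u) (G i) with hk
  set M : EuclideanSpace ℝ (Fin d) := (((Nb i).card : ℝ)⁻¹) • ∑ u ∈ Nb i, G u with hM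
  have hsc : 1 ≤ s.card := by cases hb : grp i <;> simp [hs, hb, hc0, hc1]
  have hsc' : 1 ≤ s'.card := by cases hb : grp i <;> simp [hs', hb, hc0, hc1]
  have hprod : ((sgrp grp false).card : ℝ) * ((sgrp grp true).card : ℝ)
      = (s.card : ℝ) * (s'.card : ℝ) := by
    cases hb : grp i
    · simp only [hs, hs', hb, Bool.not_false]
    · simp only [hs, hs', hb, Bool.not_true]; ring
  have key : Fk i - X i - c
      = (M - c) + (∑ u ∈ s, (p * k u) • (G i - G u) - ∑ u ∈ s', (q * k u) • (G i - G u)) := by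
    have h2 := Edecomp' s s' G i p q k (X i) M
    rw [heq]
    rw [show X i + M - p • ∑ u ∈ s, k u • G u + q • ∑ u ∈ s', k u • G u
        + (p * ∑ u ∈ s, k u - q * ∑ u ∈ s', k u) • G i - X i - c
      = (X i + M - p • ∑ u ∈ s, k u • G u + q • ∑ u ∈ s', k u • G u
        + (p * ∑ u ∈ s, k u - q * ∑ u ∈ s', k u) • G i - X i - M) + (M - c) by abel]
    rw [h2]
    abel
  rw [key]
  have hGd : ∀ u ∈ (Finset.univ : Finset V), ‖G i - G u‖ ≤ 2 * r := by
    intro u _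
    calc ‖G i - G u‖ = ‖(G i - c) - (G u - c)‖ := by abel_nf
      _ ≤ ‖G i - c‖ + ‖G u - c‖ := norm_sub_le _ _
      _ ≤ 2 * r := by linarith [hG i, hG u]
  have hkb : ∀ u ∈ (Finset.univ : Finset V), 0 ≤ k u ∧ k u ≤ 1 := by
    intro u _; exact ⟨ker_nonneg' _ _ _, ker_le_one' hα _ _⟩
  have hb1 : ‖∑ u ∈ s, (p * k u) • (G i - G u)‖ ≤ p * s.card * (2 * r) :=
    norm_kersum_le' s p (by positivity) k (fun u _ => hkb u (Finset.mem_univ u))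
      _ (2 * r) (by linarith) (fun u _ => hGd u (Finset.mem_univ u))
  have hb2 : ‖∑ u ∈ s', (q * k u) • (G i - G u)‖ ≤ q * s'.card * (2 * r) := by
    apply norm_kersum_le' s' q ?_ k (fun u _ => hkb u (Finset.mem_univ u))
      _ (2 * r) (by linarith) (fun u _ => hGd u (Finset.mem_univ u))
    rw [hq, hprod]; positivity
  have hMc : ‖M - c‖ ≤ r := avg_dist_le' (Nb i) (hNb i) G c r (fun u _ => hG u)
  have hn : (0:ℝ) < (s.card : ℝ) := by exact_mod_cast hsc
  have hn' : (0:ℝ) < (s'.card : ℝ) := by exact_mod_cast hsc'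
  calc ‖(M - c) + (∑ u ∈ s, (p * k u) • (G i - G u) - ∑ u ∈ s', (q * k u) • (G i - G u))‖
      ≤ ‖M - c‖ + ‖∑ u ∈ s, (p * k u) • (G i - G u) - ∑ u ∈ s', (q * k u) • (G i - G u)‖ :=
        norm_add_le _ _
    _ ≤ ‖M - c‖ + (‖∑ u ∈ s, (p * k u) • (G i - G u)‖ + ‖∑ u ∈ s', (q * k u) • (G i - G u)‖) := by
        linarith [norm_sub_le (∑ u ∈ s, (p * k u) • (G i - G u))
          (∑ u ∈ s', (q * k u) • (G i - G u))]
    _ ≤ r + (p * s.card * (2 * r) + q * s'.card * (2 * r)) := by linarith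
    _ = r + 4 * r / ((s.card : ℝ)) := by
        rw [hp, hq, hprod, scal_aux' _ _ _ hn.ne' hn'.ne']

lemma mulVecE_eq' {d : ℕ} (W : Matrix (Fin d) (Fin 2) ℝ) (v : EuclideanSpace ℝ (Fin d)) :
    mulVecE Wᵀ v = (LinearMap.toContinuousLinearMap (Matrix.toEuclideanLin Wᵀ)) v := by
  ext j
  rw [LinearMap.coe_toContinuousLinearMap', Matrix.toEuclideanLin_apply]
  simp [mulVecE, Matrix.mulVec, dotProduct]

lemma mulVecE_norm_le' {d : ℕ} (W : Matrix (Fin d) (Fin 2) ℝ) (v : EuclideanSpace ℝ (Fin d)) :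
    ‖mulVecE Wᵀ v‖ ≤ opNorm W * ‖v‖ := by
  rw [mulVecE_eq']; exact ContinuousLinearMap.le_opNorm _ v

lemma mulVecE_sub' {d : ℕ} (W : Matrix (Fin d) (Fin 2) ℝ) (v w : EuclideanSpace ℝ (Fin d)) :
    mulVecE Wᵀ v - mulVecE Wᵀ w = mulVecE Wᵀ (v - w) := by
  rw [mulVecE_eq', mulVecE_eq', mulVecE_eq', map_sub]

/-- Theorem 4.1 (`K = 2`): `Δ_DP ≤ (L/2)·‖W‖_op·(Δ_DP^Rep(F⁽²⁾) + C₁·‖Δ‖)` with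
`C₁ = (2 + 4/N₀ + 4/N₁)² + 6 + 8/N₀ + 8/N₁`, where `g` is the softmax map and `L > 0`
satisfies `2·|g(x)₁ − g(y)₁| ≤ L·‖x − y‖` for all `x, y ∈ ℝ²`. -/
theorem stmt0 {V : Type*} [Fintype V] {d : ℕ} {α : ℝ} (hα : 0 < α)
    (grp : V → Bool) (N₀ N₁ : ℕ)
    (hcard0 : (sgrp grp false).card = N₀) (hcard1 : (sgrp grp true).card = N₁)
    (hN₀ : 1 ≤ N₀) (hN₁ : 1 ≤ N₁)
    (Nb : V → Finset V) (hNb : ∀ i, (Nb i).Nonempty)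
    (X : V → EuclideanSpace ℝ (Fin d)) (F : ℕ → V → EuclideanSpace ℝ (Fin d))
    (hF : FairMP α grp Nb X F)
    (L : ℝ) (hL : 0 < L)
    (hLip : ∀ x y : EuclideanSpace ℝ (Fin 2),
      2 * |softmax x 1 - softmax y 1| ≤ L * ‖x - y‖)
    (W : Matrix (Fin d) (Fin 2) ℝ) :
    |(1 / (N₀ : ℝ)) * ∑ i ∈ sgrp grp false, softmax (mulVecE Wᵀ (F 2 i)) 1
        - (1 / (N₁ : ℝ)) * ∑ j ∈ sgrp grp true, softmax (mulVecE Wᵀ (F 2 j)) 1| ≤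
      L / 2 * opNorm W *
        (‖(1 / (N₀ : ℝ)) • ∑ i ∈ sgrp grp false, F 2 i
            - (1 / (N₁ : ℝ)) • ∑ j ∈ sgrp grp true, F 2 j‖
          + ((2 + 4 / (N₀ : ℝ) + 4 / (N₁ : ℝ)) ^ 2 + 6 + 8 / (N₀ : ℝ) + 8 / (N₁ : ℝ))
              * ‖dev X‖) := by
  obtain ⟨h0, hrec⟩ := hF
  have hc0' : 1 ≤ (sgrp grp false).card := hcard0 ▸ hN₀
  have hc1' : 1 ≤ (sgrp grp true).card := hcard1 ▸ hN₁
  have hS0ne : (sgrp grp false).Nonempty := Finset.card_pos.1 hc0'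
  have hS1ne : (sgrp grp true).Nonempty := Finset.card_pos.1 hc1'
  have hVne : Nonempty V := ⟨hS0ne.choose⟩
  have hN0R : (0:ℝ) < (N₀:ℝ) := by exact_mod_cast hN₀
  have hN1R : (0:ℝ) < (N₁:ℝ) := by exact_mod_cast hN₁
  set D : ℝ := ‖dev X‖ with hD
  have hD0 : 0 ≤ D := norm_nonneg _
  set Xb : EuclideanSpace ℝ (Fin d) := (1 / (Fintype.card V : ℝ)) • ∑ j, X j with hXb
  have hdev : ∀ i, ‖X i - Xb‖ ≤ D := fun i => sub_mean_le_dev' X i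
  set a : ℝ := 2 + 4 / (N₀:ℝ) + 4 / (N₁:ℝ) with ha
  have ha0 : 0 ≤ a := by rw [ha]; positivity
  clear_value a D
  have hcard4 : ∀ i : V, 4 / ((sgrp grp (grp i)).card : ℝ) ≤ 4/(N₀:ℝ) + 4/(N₁:ℝ) := by
    intro i
    cases hb : grp i
    · rw [hcard0]
      have : (0:ℝ) ≤ 4/(N₁:ℝ) := by positivity
      linarith
    · rw [hcard1]
      have : (0:ℝ) ≤ 4/(N₀:ℝ) := by positivity
      linarith
  -- Layer 1
  have hG0 : ∀ u, ‖F 0 u - Xb‖ ≤ D := by intro u; rw [h0]; exact hdev u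
  have hF1 : ∀ i, ‖F 1 i - X i - Xb‖ ≤ D + 4 * D / ((sgrp grp (grp i)).card : ℝ) := by
    intro i
    exact step_bound' hα grp hc0' hc1' Nb hNb X (F 0) (F 1) Xb D hG0 i (hrec 1 le_rfl i)
  have hrad1 : ∀ u, ‖F 1 u - (Xb + Xb)‖ ≤ a * D := by
    intro u
    have h1 := hF1 u
    have h2 := hdev u
    have h3 := hcard4 u
    have h4 : ‖F 1 u - (Xb + Xb)‖ ≤ ‖F 1 u - X u - Xb‖ + ‖X u - Xb‖ := by
      have e : F 1 u - (Xb + Xb) = (F 1 u - X u - Xb) + (X u - Xb) := by abel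
      rw [e]; exact norm_add_le _ _
    have hc : (0:ℝ) < ((sgrp grp (grp u)).card : ℝ) := by
      have : 1 ≤ (sgrp grp (grp u)).card := by
        cases hb : grp u <;> simp [hb, hc0', hc1']
      exact_mod_cast this
    have h5 : 4 * D / ((sgrp grp (grp u)).card : ℝ) ≤ (4/(N₀:ℝ) + 4/(N₁:ℝ)) * D := by
      have := mul_le_mul_of_nonneg_right h3 hD0
      calc 4 * D / ((sgrp grp (grp u)).card : ℝ)
          = 4 / ((sgrp grp (grp u)).card : ℝ) * D := by ring
        _ ≤ (4/(N₀:ℝ) + 4/(N₁:ℝ)) * D := this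
    rw [ha]
    nlinarith
  -- Layer 2
  have hF2 : ∀ i, ‖F 2 i - X i - (Xb + Xb)‖
      ≤ a * D + 4 * (a * D) / ((sgrp grp (grp i)).card : ℝ) := by
    intro i
    exact step_bound' hα grp hc0' hc1' Nb hNb X (F 1) (F 2) (Xb + Xb) (a * D) hrad1 i
      (hrec 2 (by norm_num) i)
  -- Pair bound
  have hpair : ∀ i ∈ sgrp grp false, ∀ j ∈ sgrp grp true,
      ‖F 2 i - F 2 j‖ ≤ (a^2 + 2) * D := by
    intro i hi j hj
    have hgi : grp i = false := by simpa [sgrp] using hi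
    have hgj : grp j = true := by simpa [sgrp] using hj
    have h2i := hF2 i
    rw [hgi, hcard0] at h2i
    have h2j := hF2 j
    rw [hgj, hcard1] at h2j
    have hxij : ‖X i - X j‖ ≤ 2 * D := by
      have e : X i - X j = (X i - Xb) - (X j - Xb) := by abel
      rw [e]
      calc ‖(X i - Xb) - (X j - Xb)‖ ≤ ‖X i - Xb‖ + ‖X j - Xb‖ := norm_sub_le _ _
        _ ≤ 2 * D := by linarith [hdev i, hdev j]
    have hsplit : F 2 i - F 2 j
        = (F 2 i - X i - (Xb + Xb)) - (F 2 j - X j - (Xb + Xb)) + (X i - X j) := by abel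
    rw [hsplit]
    have hle : ‖(F 2 i - X i - (Xb + Xb)) - (F 2 j - X j - (Xb + Xb)) + (X i - X j)‖
        ≤ ‖F 2 i - X i - (Xb + Xb)‖ + ‖F 2 j - X j - (Xb + Xb)‖ + ‖X i - X j‖ := by
      calc _ ≤ ‖(F 2 i - X i - (Xb + Xb)) - (F 2 j - X j - (Xb + Xb))‖ + ‖X i - X j‖ :=
            norm_add_le _ _
        _ ≤ _ := by
            have := norm_sub_le (F 2 i - X i - (Xb + Xb)) (F 2 j - X j - (Xb + Xb))
            linarith
    have harith : a * D + 4 * (a * D) / (N₀:ℝ) + (a * D + 4 * (a * D) / (N₁:ℝ)) + 2 * D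
        = (a^2 + 2) * D := by
      rw [ha]; field_simp; ring
    linarith
  -- Final averaging
  set B : ℝ := L / 2 * opNorm W * ((a^2 + 2) * D) with hB
  have hop : 0 ≤ opNorm W := norm_nonneg _
  have hpairg : ∀ i ∈ sgrp grp false, ∀ j ∈ sgrp grp true,
      |softmax (mulVecE Wᵀ (F 2 i)) 1 - softmax (mulVecE Wᵀ (F 2 j)) 1| ≤ B := by
    intro i hi j hj
    have h1 := hLip (mulVecE Wᵀ (F 2 i)) (mulVecE Wᵀ (F 2 j))
    rw [mulVecE_sub'] at h1
    have h2 : ‖mulVecE Wᵀ (F 2 i - F 2 j)‖ ≤ opNorm W * ‖F 2 i - F 2 j‖ :=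
      mulVecE_norm_le' W _
    have h3 := hpair i hi j hj
    have h4 : opNorm W * ‖F 2 i - F 2 j‖ ≤ opNorm W * ((a^2 + 2) * D) :=
      mul_le_mul_of_nonneg_left h3 hop
    have h5 : L * ‖mulVecE Wᵀ (F 2 i - F 2 j)‖ ≤ L * (opNorm W * ((a^2 + 2) * D)) :=
      mul_le_mul_of_nonneg_left (le_trans h2 h4) hL.le
    rw [hB]
    linarith
  have hB0 : 0 ≤ B := by
    rw [hB]
    have h1 : 0 ≤ (a^2 + 2) * D := mul_nonneg (by positivity) hD0
    exact mul_nonneg (mul_nonneg (by linarith : (0:ℝ) ≤ L / 2) hop) h1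
  have hsum : (1 / (N₀:ℝ)) * ∑ i ∈ sgrp grp false, softmax (mulVecE Wᵀ (F 2 i)) 1
      - (1 / (N₁:ℝ)) * ∑ j ∈ sgrp grp true, softmax (mulVecE Wᵀ (F 2 j)) 1
      = (1 / ((N₀:ℝ) * (N₁:ℝ))) * ∑ i ∈ sgrp grp false, ∑ j ∈ sgrp grp true,
          (softmax (mulVecE Wᵀ (F 2 i)) 1 - softmax (mulVecE Wᵀ (F 2 j)) 1) := by
    have e1 : ∑ i ∈ sgrp grp false, ∑ j ∈ sgrp grp true,
        (softmax (mulVecE Wᵀ (F 2 i)) 1 - softmax (mulVecE Wᵀ (F 2 j)) 1)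
        = (N₁:ℝ) * ∑ i ∈ sgrp grp false, softmax (mulVecE Wᵀ (F 2 i)) 1
          - (N₀:ℝ) * ∑ j ∈ sgrp grp true, softmax (mulVecE Wᵀ (F 2 j)) 1 := by
      calc ∑ i ∈ sgrp grp false, ∑ j ∈ sgrp grp true,
            (softmax (mulVecE Wᵀ (F 2 i)) 1 - softmax (mulVecE Wᵀ (F 2 j)) 1)
          = ∑ i ∈ sgrp grp false, ((N₁:ℝ) * softmax (mulVecE Wᵀ (F 2 i)) 1
              - ∑ j ∈ sgrp grp true, softmax (mulVecE Wᵀ (F 2 j)) 1) := by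
            apply Finset.sum_congr rfl
            intro i _
            rw [Finset.sum_sub_distrib, Finset.sum_const, hcard1, nsmul_eq_mul]
        _ = (N₁:ℝ) * ∑ i ∈ sgrp grp false, softmax (mulVecE Wᵀ (F 2 i)) 1
            - (N₀:ℝ) * ∑ j ∈ sgrp grp true, softmax (mulVecE Wᵀ (F 2 j)) 1 := by
            rw [Finset.sum_sub_distrib, Finset.sum_const, hcard0, nsmul_eq_mul,
              ← Finset.mul_sum]
    rw [e1]
    field_simp
  have habs : |(1 / (N₀:ℝ)) * ∑ i ∈ sgrp grp false, softmax (mulVecE Wᵀ (F 2 i)) 1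
      - (1 / (N₁:ℝ)) * ∑ j ∈ sgrp grp true, softmax (mulVecE Wᵀ (F 2 j)) 1| ≤ B := by
    rw [hsum, abs_mul, abs_of_pos (by positivity : (0:ℝ) < 1 / ((N₀:ℝ) * (N₁:ℝ)))]
    have hsb : |∑ i ∈ sgrp grp false, ∑ j ∈ sgrp grp true,
        (softmax (mulVecE Wᵀ (F 2 i)) 1 - softmax (mulVecE Wᵀ (F 2 j)) 1)|
        ≤ (N₀:ℝ) * (N₁:ℝ) * B := by
      calc |∑ i ∈ sgrp grp false, ∑ j ∈ sgrp grp true,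
            (softmax (mulVecE Wᵀ (F 2 i)) 1 - softmax (mulVecE Wᵀ (F 2 j)) 1)|
          ≤ ∑ i ∈ sgrp grp false, |∑ j ∈ sgrp grp true,
              (softmax (mulVecE Wᵀ (F 2 i)) 1 - softmax (mulVecE Wᵀ (F 2 j)) 1)| :=
            Finset.abs_sum_le_sum_abs _ _
        _ ≤ ∑ i ∈ sgrp grp false, ∑ j ∈ sgrp grp true,
              |softmax (mulVecE Wᵀ (F 2 i)) 1 - softmax (mulVecE Wᵀ (F 2 j)) 1| := by
            apply Finset.sum_le_sum
            intro i _
            exact Finset.abs_sum_le_sum_abs _ _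
        _ ≤ ∑ _i ∈ sgrp grp false, (N₁:ℝ) * B := by
            apply Finset.sum_le_sum
            intro i hi
            calc ∑ j ∈ sgrp grp true,
                  |softmax (mulVecE Wᵀ (F 2 i)) 1 - softmax (mulVecE Wᵀ (F 2 j)) 1|
                ≤ ∑ _j ∈ sgrp grp true, B :=
                  Finset.sum_le_sum (fun j hj => hpairg i hi j hj)
              _ = (N₁:ℝ) * B := by rw [Finset.sum_const, hcard1, nsmul_eq_mul]
        _ = (N₀:ℝ) * ((N₁:ℝ) * B) := by rw [Finset.sum_const, hcard0, nsmul_eq_mul]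
        _ = (N₀:ℝ) * (N₁:ℝ) * B := by ring
    calc 1 / ((N₀:ℝ) * (N₁:ℝ)) * |∑ i ∈ sgrp grp false, ∑ j ∈ sgrp grp true,
          (softmax (mulVecE Wᵀ (F 2 i)) 1 - softmax (mulVecE Wᵀ (F 2 j)) 1)|
        ≤ 1 / ((N₀:ℝ) * (N₁:ℝ)) * ((N₀:ℝ) * (N₁:ℝ) * B) := by
          apply mul_le_mul_of_nonneg_left hsb (by positivity)
      _ = B := by field_simp
  refine le_trans habs ?_
  rw [hB]
  have hmd : 0 ≤ ‖(1 / (N₀ : ℝ)) • ∑ i ∈ sgrp grp false, F 2 i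
      - (1 / (N₁ : ℝ)) • ∑ j ∈ sgrp grp true, F 2 j‖ := norm_nonneg _
  have hC4 : (0:ℝ) ≤ (4 + 8/(N₀:ℝ) + 8/(N₁:ℝ)) * D := mul_nonneg (by positivity) hD0
  have key : (a^2 + 2) * D
      ≤ ‖(1 / (N₀ : ℝ)) • ∑ i ∈ sgrp grp false, F 2 i
          - (1 / (N₁ : ℝ)) • ∑ j ∈ sgrp grp true, F 2 j‖
        + (a^2 + 6 + 8/(N₀:ℝ) + 8/(N₁:ℝ)) * D := by linarith [hmd, hC4]
  exact mul_le_mul_of_nonneg_left key (mul_nonneg (by linarith : (0:ℝ) ≤ L / 2) hop)
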